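/- Let p > 0, b = 1/√2, and f(z) = z·(z+b)/(1+bz), with Taylor expansion f(z) = Σ_{k=1}^∞ a_k z^k (so a_0 = 0). Then for r ∈ [0,1), Σ_{k=1}^∞ |a_k| r^k = br/(1-br), and this is strictly greater than 1 if and only if r > 1/√2. In particular, the radius r_p(0) = 1/√2 in the improved Bohr inequality cannot be improved when a_0 = 0. -/

import Mathlib

open scoped NNReal ENNReal

lemma coeff_unique_aux {d : ℕ → ℂ} {g : ℂ → ℂ}
    (hd : ∀ z : ℂ, ‖z‖ < 1 → HasSum (fun k => d k * z ^ k) (g z)) :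
    HasFPowerSeriesOnBall g (FormalMultilinearSeries.ofScalars ℂ d) 0 ((1/2 : ℝ≥0) : ℝ≥0∞) := by
  have hsum : Summable fun k => d k * (1/2 : ℂ) ^ k :=
    (hd (1/2 : ℂ) (by norm_num)).summable
  have h0 := hsum.tendsto_atTop_zero.isBigO_one ℝ
  have hb : (fun n => ‖(FormalMultilinearSeries.ofScalars ℂ d) n‖ * ((1/2 : ℝ≥0) : ℝ) ^ n)
      =O[Filter.atTop] (fun _ => (1 : ℝ)) := by
    have heq : (fun n => ‖(FormalMultilinearSeries.ofScalars ℂ d) n‖ * ((1/2 : ℝ≥0) : ℝ) ^ n)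
        = fun n => ‖d n * (1/2 : ℂ) ^ n‖ := by
      funext n
      rw [FormalMultilinearSeries.ofScalars_norm, norm_mul, norm_pow]
      norm_num
    rw [heq]
    exact h0.norm_left
  constructor
  · exact FormalMultilinearSeries.le_radius_of_isBigO _ hb
  · exact ENNReal.coe_pos.mpr (by norm_num)
  · intro y hy
    have hy' : ‖y‖ < 1 := by
      rw [EMetric.mem_ball, edist_zero_right] at hy
      rw [enorm_eq_nnnorm, ENNReal.coe_lt_coe] at hy
      have := NNReal.coe_lt_coe.mpr hy
      rw [coe_nnnorm] at this
      have h12 : ((1/2 : ℝ≥0) : ℝ) = 1/2 := by norm_num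
      linarith [h12 ▸ this]
    have hfe : (fun n => (FormalMultilinearSeries.ofScalars ℂ d n) fun _ => y)
        = fun k => d k * y ^ k := by
      funext n
      rw [FormalMultilinearSeries.ofScalars_apply_eq, smul_eq_mul]
    rw [zero_add, hfe]
    exact hd y hy'

lemma coeff_unique {a c : ℕ → ℂ} {g : ℂ → ℂ}
    (ha : ∀ z : ℂ, ‖z‖ < 1 → HasSum (fun k => a k * z ^ k) (g z))
    (hc : ∀ z : ℂ, ‖z‖ < 1 → HasSum (fun k => c k * z ^ k) (g z)) : a = c := by
  have h1 := (coeff_unique_aux ha).hasFPowerSeriesAt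
  have h2 := (coeff_unique_aux hc).hasFPowerSeriesAt
  exact FormalMultilinearSeries.ofScalars_series_injective ℂ ℂ
    (h1.eq_formalMultilinearSeries h2)

/-- Sharpness of the radius `r_p(0) = 1/√2` in the improved Bohr inequality when
`a_0 = 0`: for `b = 1/√2` and `f(z) = z(z+b)/(1+bz)` with Taylor coefficients `a_k`
(`a_0 = 0`), one has `Σ_{k≥1} |a_k| r^k = br/(1-br)` for `r ∈ [0,1)`, and this
exceeds `1` exactly when `r > 1/√2`. -/
theorem statement5 (p : ℝ) (hp : 0 < p) (b : ℝ) (hb : b = 1 / Real.sqrt 2)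
    (a : ℕ → ℂ) (ha0 : a 0 = 0)
    (ha : ∀ z : ℂ, ‖z‖ < 1 →
      HasSum (fun k : ℕ => a k * z ^ k) (z * (z + (b : ℂ)) / (1 + (b : ℂ) * z)))
    (r : ℝ) (hr : r ∈ Set.Ico (0 : ℝ) 1) :
    (∑' k : ℕ, ‖a (k + 1)‖ * r ^ (k + 1)) = b * r / (1 - b * r) ∧
    (1 < b * r / (1 - b * r) ↔ 1 / Real.sqrt 2 < r) := by
  obtain ⟨hr0, hr1⟩ := hr
  have h2 : (0:ℝ) < Real.sqrt 2 := Real.sqrt_pos.mpr (by norm_num)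
  have hs2 : Real.sqrt 2 * Real.sqrt 2 = 2 := Real.mul_self_sqrt (by norm_num)
  have hbsq : b ^ 2 = 1 / 2 := by
    rw [hb, div_pow, one_pow, Real.sq_sqrt (by norm_num : (0:ℝ) ≤ 2)]
  have hb0 : 0 < b := by rw [hb]; positivity
  have hb1 : b < 1 := by nlinarith [hbsq]
  set c : ℕ → ℂ := fun k => if k = 0 then 0 else if k = 1 then (b:ℂ) else (1/2) * (-(b:ℂ))^(k-2)
    with hcdef
  have hbsqC : (b:ℂ) ^ 2 = 1/2 := by
    rw [show ((b:ℂ))^2 = ((b^2 : ℝ) : ℂ) by push_cast; ring, hbsq]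
    norm_num
  have hcsum : ∀ z : ℂ, ‖z‖ < 1 →
      HasSum (fun k : ℕ => c k * z ^ k) (z * (z + (b : ℂ)) / (1 + (b : ℂ) * z)) := by
    intro z hz
    have hbz : ‖(b:ℂ) * z‖ < 1 := by
      rw [norm_mul, Complex.norm_real, Real.norm_of_nonneg hb0.le]
      nlinarith [norm_nonneg z]
    have hden : (1 : ℂ) + (b:ℂ) * z ≠ 0 := by
      intro h
      have : ‖(1:ℂ)‖ = ‖(b:ℂ)*z‖ := by
        rw [show (b:ℂ)*z = -(1:ℂ) by linear_combination h]
        simp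
      rw [norm_one] at this; linarith
    have hgeo : HasSum (fun n : ℕ => (-((b:ℂ)*z))^n) (1 - (-((b:ℂ)*z)))⁻¹ :=
      hasSum_geometric_of_norm_lt_one (by simpa using hbz)
    have hgeo2 : HasSum (fun n : ℕ => (z^2/2) * (-((b:ℂ)*z))^n)
        ((z^2/2) * (1 + (b:ℂ)*z)⁻¹) := by
      simpa [sub_neg_eq_add] using hgeo.mul_left (z^2/2)
    rw [← hasSum_nat_add_iff' 2]
    have hfun : (fun n : ℕ => c (n+2) * z^(n+2)) = fun n : ℕ => (z^2/2) * (-((b:ℂ)*z))^n := by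
      funext n
      simp only [hcdef, if_neg (by omega : ¬ n + 2 = 0), if_neg (by omega : ¬ n + 2 = 1),
        Nat.add_sub_cancel]
      rw [show -((b:ℂ)*z) = (-(b:ℂ))*z by ring, mul_pow]
      ring
    have hval : z * (z + (b:ℂ)) / (1 + (b:ℂ)*z) - ∑ i ∈ Finset.range 2, c i * z^i
        = (z^2/2) * (1 + (b:ℂ)*z)⁻¹ := by
      rw [Finset.sum_range_succ, Finset.sum_range_one]
      simp only [hcdef, if_pos rfl, if_neg one_ne_zero, if_true]
      have hinv : (1 + (b:ℂ)*z) * (1 + (b:ℂ)*z)⁻¹ = 1 := mul_inv_cancel₀ hden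
      linear_combination (-z^2*(1+(b:ℂ)*z)⁻¹) * hbsqC + ((b:ℂ)*z) * hinv
    rw [hval, hfun]
    exact hgeo2
  have hac : a = c := coeff_unique ha hcsum
  have hnorm : ∀ k : ℕ, ‖a (k+1)‖ * r^(k+1)
      = if k = 0 then b * r else (1/2) * b^(k-1) * r^(k+1) := by
    intro k
    rw [hac]
    match k with
    | 0 =>
      have hc1 : c 1 = (b:ℂ) := by simp [hcdef]
      rw [show (0:ℕ)+1 = 1 from rfl, hc1, pow_one, if_pos rfl, Complex.norm_real,
        Real.norm_of_nonneg hb0.le]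
    | (n+1) =>
      have hc : c (n+2) = (1/2) * (-(b:ℂ))^n := by
        simp only [hcdef]
        rw [if_neg (by omega), if_neg (by omega), show n+2-2 = n from rfl]
      rw [show n+1+1 = n+2 from rfl, hc, if_neg (Nat.succ_ne_zero n),
        show n+1-1 = n from rfl, norm_mul, norm_pow, norm_neg, Complex.norm_real,
        Real.norm_of_nonneg hb0.le]
      norm_num
  have hbr1 : b * r < 1 := by nlinarith
  have hbr0 : 0 ≤ b * r := by positivity
  have hT : HasSum (fun k : ℕ => ‖a (k+1)‖ * r^(k+1)) (b*r/(1-b*r)) := by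
    have hgeoR : HasSum (fun n : ℕ => (r^2/2) * (b*r)^n) ((r^2/2) * (1-b*r)⁻¹) :=
      (hasSum_geometric_of_norm_lt_one (ξ := b*r) (by rw [Real.norm_of_nonneg hbr0]; exact hbr1)).mul_left _
    rw [← hasSum_nat_add_iff' 1]
    have hfun : (fun n : ℕ => ‖a (n+1+1)‖ * r^(n+1+1)) = fun n : ℕ => (r^2/2) * (b*r)^n := by
      funext n
      rw [hnorm (n+1), if_neg (Nat.succ_ne_zero n), Nat.succ_sub_one, mul_pow]
      ring
    have hval : b*r/(1-b*r) - ∑ i ∈ Finset.range 1, ‖a (i+1)‖ * r^(i+1)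
        = (r^2/2) * (1-b*r)⁻¹ := by
      rw [Finset.sum_range_one, hnorm 0, if_pos rfl]
      have hne : (1:ℝ) - b*r ≠ 0 := by linarith
      field_simp
      linear_combination (2*r^2) * hbsq
    rw [hval, hfun]
    exact hgeoR
  refine ⟨hT.tsum_eq, ?_⟩
  have h2b : 2 * b = Real.sqrt 2 := by
    rw [hb]; field_simp; norm_num
  have e1 : r * Real.sqrt 2 = 2*b*r := by rw [← h2b]; ring
  rw [one_lt_div (by linarith : (0:ℝ) < 1 - b*r), div_lt_iff₀ h2]
  constructor
  · intro h; linarith [e1]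
  · intro h; linarith [e1]
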